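/- Let n ≥ 2, P_3 = [n]^3, and L_3 the set of axis-parallel grid lines intersecting P_3. Then (P_3, L_3) is not 4-separable: there exist distinct 4-element sets Y, Z ⊆ P_3 hitting the same set of lines. -/
import Mathlib

lemma vec3_eq_iff {α : Type*} (u v : Fin 3 → α) : u = v ↔ u 0 = v 0 ∧ u 1 = v 1 ∧ u 2 = v 2 := by
  constructor
  · rintro rfl; exact ⟨rfl, rfl, rfl⟩
  · rintro ⟨h0, h1, h2⟩; funext j; fin_cases j <;> assumption

theorem gridLines_not_four_separable (n : ℕ) (hn : 2 ≤ n) :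
    ∃ Y Z : Finset (Fin 3 → Fin n), Y ≠ Z ∧ Y.card = 4 ∧ Z.card = 4 ∧
      ∀ (i : Fin 3) (a : Fin 3 → Fin n),
        (∃ y ∈ Y, ∀ j, j ≠ i → y j = a j) ↔ (∃ z ∈ Z, ∀ j, j ≠ i → z j = a j) := by
  obtain ⟨m, rfl⟩ : ∃ m, n = m + 2 := ⟨n - 2, by omega⟩
  refine ⟨{![0,0,0], ![1,1,0], ![1,0,1], ![0,1,1]},
          {![1,0,0], ![0,1,0], ![0,0,1], ![1,1,1]}, ?_, ?_, ?_, ?_⟩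
  · intro hYZ
    have : (![0,0,0] : Fin 3 → Fin (m+2)) ∈
        ({![1,0,0], ![0,1,0], ![0,0,1], ![1,1,1]} : Finset (Fin 3 → Fin (m+2))) := by
      rw [← hYZ]; simp
    simp [vec3_eq_iff] at this
  · simp [Finset.card_insert_of_notMem, vec3_eq_iff]
  · simp [Finset.card_insert_of_notMem, vec3_eq_iff]
  · intro i a
    constructor
    · rintro ⟨y, hy, h⟩
      fin_cases hy <;> fin_cases i <;>
      [ exact ⟨![1,0,0], by simp, fun j hj => by fin_cases j <;> (first | exact h 0 (by decide) | exact h 1 (by decide) | exact h 2 (by decide) | simp_all)⟩;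
        exact ⟨![0,1,0], by simp, fun j hj => by fin_cases j <;> (first | exact h 0 (by decide) | exact h 1 (by decide) | exact h 2 (by decide) | simp_all)⟩;
        exact ⟨![0,0,1], by simp, fun j hj => by fin_cases j <;> (first | exact h 0 (by decide) | exact h 1 (by decide) | exact h 2 (by decide) | simp_all)⟩;
        exact ⟨![0,1,0], by simp, fun j hj => by fin_cases j <;> (first | exact h 0 (by decide) | exact h 1 (by decide) | exact h 2 (by decide) | simp_all)⟩;
        exact ⟨![1,0,0], by simp, fun j hj => by fin_cases j <;> (first | exact h 0 (by decide) | exact h 1 (by decide) | exact h 2 (by decide) | simp_all)⟩;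
        exact ⟨![1,1,1], by simp, fun j hj => by fin_cases j <;> (first | exact h 0 (by decide) | exact h 1 (by decide) | exact h 2 (by decide) | simp_all)⟩;
        exact ⟨![0,0,1], by simp, fun j hj => by fin_cases j <;> (first | exact h 0 (by decide) | exact h 1 (by decide) | exact h 2 (by decide) | simp_all)⟩;
        exact ⟨![1,1,1], by simp, fun j hj => by fin_cases j <;> (first | exact h 0 (by decide) | exact h 1 (by decide) | exact h 2 (by decide) | simp_all)⟩;
        exact ⟨![1,0,0], by simp, fun j hj => by fin_cases j <;> (first | exact h 0 (by decide) | exact h 1 (by decide) | exact h 2 (by decide) | simp_all)⟩;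
        exact ⟨![1,1,1], by simp, fun j hj => by fin_cases j <;> (first | exact h 0 (by decide) | exact h 1 (by decide) | exact h 2 (by decide) | simp_all)⟩;
        exact ⟨![0,0,1], by simp, fun j hj => by fin_cases j <;> (first | exact h 0 (by decide) | exact h 1 (by decide) | exact h 2 (by decide) | simp_all)⟩;
        exact ⟨![0,1,0], by simp, fun j hj => by fin_cases j <;> (first | exact h 0 (by decide) | exact h 1 (by decide) | exact h 2 (by decide) | simp_all)⟩ ]
    · rintro ⟨y, hy, h⟩
      fin_cases hy <;> fin_cases i <;>
      [ exact ⟨![0,0,0], by simp, fun j hj => by fin_cases j <;> (first | exact h 0 (by decide) | exact h 1 (by decide) | exact h 2 (by decide) | simp_all)⟩;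
        exact ⟨![1,1,0], by simp, fun j hj => by fin_cases j <;> (first | exact h 0 (by decide) | exact h 1 (by decide) | exact h 2 (by decide) | simp_all)⟩;
        exact ⟨![1,0,1], by simp, fun j hj => by fin_cases j <;> (first | exact h 0 (by decide) | exact h 1 (by decide) | exact h 2 (by decide) | simp_all)⟩;
        exact ⟨![1,1,0], by simp, fun j hj => by fin_cases j <;> (first | exact h 0 (by decide) | exact h 1 (by decide) | exact h 2 (by decide) | simp_all)⟩;
        exact ⟨![0,0,0], by simp, fun j hj => by fin_cases j <;> (first | exact h 0 (by decide) | exact h 1 (by decide) | exact h 2 (by decide) | simp_all)⟩;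
        exact ⟨![0,1,1], by simp, fun j hj => by fin_cases j <;> (first | exact h 0 (by decide) | exact h 1 (by decide) | exact h 2 (by decide) | simp_all)⟩;
        exact ⟨![1,0,1], by simp, fun j hj => by fin_cases j <;> (first | exact h 0 (by decide) | exact h 1 (by decide) | exact h 2 (by decide) | simp_all)⟩;
        exact ⟨![0,1,1], by simp, fun j hj => by fin_cases j <;> (first | exact h 0 (by decide) | exact h 1 (by decide) | exact h 2 (by decide) | simp_all)⟩;
        exact ⟨![0,0,0], by simp, fun j hj => by fin_cases j <;> (first | exact h 0 (by decide) | exact h 1 (by decide) | exact h 2 (by decide) | simp_all)⟩;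
        exact ⟨![0,1,1], by simp, fun j hj => by fin_cases j <;> (first | exact h 0 (by decide) | exact h 1 (by decide) | exact h 2 (by decide) | simp_all)⟩;
        exact ⟨![1,0,1], by simp, fun j hj => by fin_cases j <;> (first | exact h 0 (by decide) | exact h 1 (by decide) | exact h 2 (by decide) | simp_all)⟩;
        exact ⟨![1,1,0], by simp, fun j hj => by fin_cases j <;> (first | exact h 0 (by decide) | exact h 1 (by decide) | exact h 2 (by decide) | simp_all)⟩ ]
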